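/- For every integer n ≥ 2, the sum ∑ C_{r_1}·C_{r_2}·C_{r_3} over all triples (r_1,r_2,r_3) of integers with r_1, r_2, r_3 ≥ 1 and r_1 + r_2 + r_3 = n − 1 equals C_{n+1} − 4·C_n + 3·C_{n−1}. -/

import Mathlib

open Finset Finset.Nat

private lemma conv (m : ℕ) :
    ∑ p ∈ antidiagonal m, (catalan p.1 : ℤ) * catalan p.2 = catalan (m + 1) := by
  have h : (catalan (m + 1) : ℤ) = ((∑ ij ∈ antidiagonal m, catalan ij.1 * catalan ij.2 : ℕ) : ℤ) := by
    norm_cast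
    exact catalan_succ' m
  rw [h]
  push_cast
  rfl

private lemma conv1 (m : ℕ) :
    ∑ p ∈ antidiagonal m, (catalan p.1 : ℤ) * catalan (p.2 + 1)
      = (catalan (m + 2) : ℤ) - catalan (m + 1) := by
  have h := conv (m + 1)
  rw [Finset.Nat.sum_antidiagonal_succ'
    (f := fun p => (catalan p.1 : ℤ) * catalan p.2)] at h
  simp only [catalan_zero, Nat.cast_one, mul_one] at h
  linarith

private lemma Bsum (m : ℕ) :
    ∑ q ∈ (antidiagonal m).filter (fun q => 1 ≤ q.1 ∧ 1 ≤ q.2),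
        (catalan q.1 : ℤ) * catalan q.2
      = (catalan (m + 1) : ℤ) - 2 * catalan m + (if m = 0 then 1 else 0) := by
  rcases Nat.eq_zero_or_pos m with rfl | hm
  · simp [Finset.Nat.antidiagonal_zero, Finset.filter_singleton]
  · have hcompl : (antidiagonal m).filter (fun q => ¬(1 ≤ q.1 ∧ 1 ≤ q.2))
        = {(0, m), (m, 0)} := by
      ext ⟨a, b⟩
      simp only [mem_filter, Finset.HasAntidiagonal.mem_antidiagonal, mem_insert, mem_singleton, Prod.mk.injEq]
      omega
    have := Finset.sum_filter_add_sum_filter_not (antidiagonal m)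
      (fun q => 1 ≤ q.1 ∧ 1 ≤ q.2) (fun q => (catalan q.1 : ℤ) * catalan q.2)
    rw [hcompl, conv m] at this
    have hne : ((0, m) : ℕ × ℕ) ≠ (m, 0) := by
      simp only [ne_eq, Prod.mk.injEq]; omega
    rw [Finset.sum_insert (by simpa using hne), Finset.sum_singleton] at this
    simp only [catalan_zero, Nat.cast_one, one_mul, mul_one] at this
    have : ¬ m = 0 := by omega
    simp only [this, if_false]
    linarith

private lemma tripleSum (m : ℕ) :
    ∑ r ∈ (antidiagonalTuple 3 m).filter (fun r => ∀ i, 1 ≤ r i),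
        ∏ i, (catalan (r i) : ℤ)
      = ∑ p ∈ (antidiagonal m).filter (fun p => 1 ≤ p.1),
          (catalan p.1 : ℤ) *
            ∑ q ∈ (antidiagonal p.2).filter (fun q => 1 ≤ q.1 ∧ 1 ≤ q.2),
              (catalan q.1 : ℤ) * catalan q.2 := by
  simp_rw [Finset.mul_sum]
  rw [Finset.sum_sigma']
  refine Finset.sum_nbij' (fun x => ⟨(x 0, x 1 + x 2), (x 1, x 2)⟩)
    (fun x => ![x.1.1, x.2.1, x.2.2]) ?_ ?_ ?_ ?_ ?_
  · intro r hr
    simp only [mem_filter, mem_antidiagonalTuple, Fin.sum_univ_three] at hr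
    simp only [Finset.mem_sigma, mem_filter, Finset.HasAntidiagonal.mem_antidiagonal]
    refine ⟨⟨by omega, hr.2 0⟩, ?_, hr.2 1, hr.2 2⟩
    trivial
  · intro x hx
    obtain ⟨⟨a, b⟩, c, d⟩ := x
    simp only [Finset.mem_sigma, mem_filter, Finset.HasAntidiagonal.mem_antidiagonal] at hx
    obtain ⟨⟨h1, h2⟩, h3, h4, h5⟩ := hx
    simp only [mem_filter, mem_antidiagonalTuple, Fin.sum_univ_three]
    constructor
    · simp only [Matrix.cons_val_zero, Matrix.cons_val_one, Matrix.head_cons,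
        Matrix.cons_val_two, Matrix.tail_cons]
      omega
    · intro i
      fin_cases i
      exacts [h2, h4, h5]
  · intro r _
    funext i
    fin_cases i <;> rfl
  · intro x hx
    simp only [Finset.mem_sigma, mem_filter, Finset.HasAntidiagonal.mem_antidiagonal] at hx
    simp only [Matrix.cons_val_zero, Matrix.cons_val_one, Matrix.head_cons,
      Matrix.cons_val_two, Matrix.tail_cons]
    have h2 : x.2.1 + x.2.2 = x.1.2 := hx.2.1
    obtain ⟨⟨a, b⟩, ⟨c, d⟩⟩ := x
    simp only at h2 ⊢
    subst h2
    rfl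
  · intro r hr
    simp only [Fin.prod_univ_three]
    ring

theorem stmt_5 (n : ℕ) (hn : 2 ≤ n) :
    (∑ r ∈ (Finset.Nat.antidiagonalTuple 3 (n - 1)).filter (fun r => ∀ i, 1 ≤ r i),
        ∏ i, (catalan (r i) : ℤ)) =
      (catalan (n + 1) : ℤ) - 4 * catalan n + 3 * catalan (n - 1) := by
  obtain ⟨m, rfl⟩ : ∃ m, n = m + 2 := ⟨n - 2, by omega⟩
  have hm1 : m + 2 - 1 = m + 1 := by omega
  rw [hm1, tripleSum (m + 1)]
  -- rewrite inner sums using Bsum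
  have step : ∑ p ∈ (antidiagonal (m + 1)).filter (fun p => 1 ≤ p.1),
          (catalan p.1 : ℤ) *
            ∑ q ∈ (antidiagonal p.2).filter (fun q => 1 ≤ q.1 ∧ 1 ≤ q.2),
              (catalan q.1 : ℤ) * catalan q.2
      = ∑ p ∈ (antidiagonal (m + 1)).filter (fun p => 1 ≤ p.1),
          (catalan p.1 : ℤ) *
            ((catalan (p.2 + 1) : ℤ) - 2 * catalan p.2 + (if p.2 = 0 then 1 else 0)) := by
    refine Finset.sum_congr rfl fun p _ => ?_
    rw [Bsum]
  rw [step]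
  -- extend to full antidiagonal
  set g : ℕ × ℕ → ℤ := fun p =>
    (catalan p.1 : ℤ) * ((catalan (p.2 + 1) : ℤ) - 2 * catalan p.2 + (if p.2 = 0 then 1 else 0))
    with hg
  have hcompl : (antidiagonal (m + 1)).filter (fun p => ¬ 1 ≤ p.1) = {(0, m + 1)} := by
    ext ⟨a, b⟩
    simp only [mem_filter, Finset.HasAntidiagonal.mem_antidiagonal, mem_singleton, Prod.mk.injEq]
    omega
  have hsplit := Finset.sum_filter_add_sum_filter_not (antidiagonal (m + 1))
    (fun p => 1 ≤ p.1) g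
  rw [hcompl, Finset.sum_singleton] at hsplit
  have hg0 : g (0, m + 1) = (catalan (m + 2) : ℤ) - 2 * catalan (m + 1) := by
    simp [hg]
  -- the full sum
  have hfull : ∑ p ∈ antidiagonal (m + 1), g p
      = ((catalan (m + 3) : ℤ) - catalan (m + 2)) - 2 * catalan (m + 2) + catalan (m + 1) := by
    have e1 : ∑ p ∈ antidiagonal (m + 1), g p
        = (∑ p ∈ antidiagonal (m + 1), (catalan p.1 : ℤ) * catalan (p.2 + 1))
          - 2 * (∑ p ∈ antidiagonal (m + 1), (catalan p.1 : ℤ) * catalan p.2)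
          + (∑ p ∈ antidiagonal (m + 1), (catalan p.1 : ℤ) * (if p.2 = 0 then 1 else 0)) := by
      rw [Finset.mul_sum, ← Finset.sum_sub_distrib, ← Finset.sum_add_distrib]
      refine Finset.sum_congr rfl fun p _ => ?_
      show g p = _
      simp only [hg]
      split_ifs <;> ring
    have e2 : ∑ p ∈ antidiagonal (m + 1), (catalan p.1 : ℤ) * (if p.2 = 0 then 1 else 0)
        = catalan (m + 1) := by
      have hfil : (antidiagonal (m + 1)).filter (fun p => p.2 = 0) = {(m + 1, 0)} := by
        ext ⟨a, b⟩
        simp only [mem_filter, Finset.HasAntidiagonal.mem_antidiagonal, mem_singleton, Prod.mk.injEq]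
        omega
      calc ∑ p ∈ antidiagonal (m + 1), (catalan p.1 : ℤ) * (if p.2 = 0 then 1 else 0)
          = ∑ p ∈ antidiagonal (m + 1), (if p.2 = 0 then (catalan p.1 : ℤ) else 0) := by
            refine Finset.sum_congr rfl fun p _ => ?_
            simp [mul_ite]
        _ = ∑ p ∈ (antidiagonal (m + 1)).filter (fun p => p.2 = 0), (catalan p.1 : ℤ) := by
            rw [Finset.sum_filter]
        _ = catalan (m + 1) := by rw [hfil, Finset.sum_singleton]
    rw [e1, e2, conv1 (m + 1), conv (m + 1)]
  have h3 : (catalan (m + 2 + 1) : ℤ) = catalan (m + 3) := rfl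
  linarith [hsplit, hfull, hg0, h3]
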